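/- Let V be a real inner product space, W ⊆ V a subspace admitting an orthogonal projection onto it, and F : V → V a symmetric linear map with F² = I. If W is slant with slant angle ϑ with respect to F, then for all X, Y ∈ W: ⟨fX, fY⟩ = cos²ϑ·⟨X, Y⟩ and ⟨ωX, ωY⟩ = sin²ϑ·⟨X, Y⟩. -/

import Mathlib

open scoped RealInnerProductSpace

/-- The tangential part of `J X` with respect to the subspace `W`:
`T X := P_W (J X)` (also used for `t U := P_W (J U)` when `U ∈ Wᗮ`). -/
noncomputable def tang {V : Type*} [NormedAddCommGroup V] [InnerProductSpace ℝ V]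
    (W : Submodule ℝ V) [W.HasOrthogonalProjection] (J : V →ₗ[ℝ] V) (X : V) : V :=
  (W.orthogonalProjectionOnto (J X) : V)

/-- The normal part of `J X` with respect to the subspace `W`:
`N X := J X − T X` (also used for `n U := J U − t U` when `U ∈ Wᗮ`). -/
noncomputable def norm' {V : Type*} [NormedAddCommGroup V] [InnerProductSpace ℝ V]
    (W : Submodule ℝ V) [W.HasOrthogonalProjection] (J : V →ₗ[ℝ] V) (X : V) : V :=
  J X - tang W J X


/-- If `W` is slant with slant angle `ϑ` with respect to a symmetric almost
product structure `F` (`F² = I`), then for all `X, Y ∈ W`: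
`⟨fX, fY⟩ = cos²ϑ·⟨X, Y⟩` and `⟨ωX, ωY⟩ = sin²ϑ·⟨X, Y⟩`. -/
theorem slant_almost_product_inner {V : Type*} [NormedAddCommGroup V] [InnerProductSpace ℝ V]
    (W : Submodule ℝ V) [W.HasOrthogonalProjection]
    (F : V →ₗ[ℝ] V)
    (hFsym : ∀ x y : V, ⟪F x, y⟫ = ⟪x, F y⟫)
    (hF2 : ∀ v : V, F (F v) = v)
    (ϑ : ℝ) (hϑ : ϑ ∈ Set.Icc 0 (Real.pi / 2))
    (hslant : ∀ X ∈ W, ‖tang W F X‖ = Real.cos ϑ * ‖F X‖) :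
    ∀ X ∈ W, ∀ Y ∈ W,
      ⟪tang W F X, tang W F Y⟫ = Real.cos ϑ ^ 2 * ⟪X, Y⟫ ∧
      ⟪norm' W F X, norm' W F Y⟫ = Real.sin ϑ ^ 2 * ⟪X, Y⟫ := by
  set c := Real.cos ϑ with hc
  -- F preserves inner products
  have hFinner : ∀ x y : V, ⟪F x, F y⟫ = ⟪x, y⟫ := by
    intro x y
    rw [hFsym, hF2]
  -- self-inner for tang
  have hself : ∀ X ∈ W, ⟪tang W F X, tang W F X⟫ = c ^ 2 * ⟪X, X⟫ := by
    intro X hX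
    have h1 := hslant X hX
    have h2 : ‖F X‖ = ‖X‖ := by
      have := hFinner X X
      rw [real_inner_self_eq_norm_sq, real_inner_self_eq_norm_sq] at this
      nlinarith [norm_nonneg (F X), norm_nonneg X]
    rw [real_inner_self_eq_norm_sq, real_inner_self_eq_norm_sq, h1, h2]
    ring
  -- tang is additive
  have hadd : ∀ X Y : V, tang W F (X + Y) = tang W F X + tang W F Y := by
    intro X Y
    simp [tang, map_add]
  intro X hX Y hY
  have hXY : X + Y ∈ W := W.add_mem hX hY
  have hpol : ⟪tang W F X, tang W F Y⟫ = c ^ 2 * ⟪X, Y⟫ := by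
    have h1 := hself _ hXY
    have h2 := hself X hX
    have h3 := hself Y hY
    rw [hadd] at h1
    rw [inner_add_add_self] at h1
    rw [inner_add_add_self] at h1
    have hsymm : ⟪tang W F X, tang W F Y⟫ = ⟪tang W F Y, tang W F X⟫ :=
      real_inner_comm _ _
    have hsymm2 : ⟪X, Y⟫ = ⟪Y, X⟫ := real_inner_comm _ _
    nlinarith [h1, h2, h3]
  refine ⟨hpol, ?_⟩
  -- tang X ∈ W, norm' ⊥ W
  have htmem : ∀ Z : V, tang W F Z ∈ W := fun Z => (W.orthogonalProjectionOnto (F Z)).2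
  have hnmem : ∀ Z : V, norm' W F Z ∈ Wᗮ := fun Z =>
    W.sub_starProjection_mem_orthogonal (F Z)
  have hFt : ∀ Z : V, F Z = tang W F Z + norm' W F Z := by
    intro Z; simp [norm']
  have hcross1 : ⟪tang W F X, norm' W F Y⟫ = 0 := (hnmem Y) _ (htmem X)
  have hcross2 : ⟪norm' W F X, tang W F Y⟫ = by exact (0 : ℝ) := by
    rw [real_inner_comm]; exact (hnmem X) _ (htmem Y)
  have hFF : ⟪F X, F Y⟫ = ⟪X, Y⟫ := hFinner X Y
  rw [hFt X, hFt Y, inner_add_left, inner_add_right, inner_add_right, hpol, hcross1, hcross2] at hFF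
  have hsin : Real.sin ϑ ^ 2 = 1 - c ^ 2 := Real.sin_sq ϑ
  rw [hsin]
  linarith
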